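/- Upper bound on posterior spread: ∑_{i=1}^∞ 1/(i^{1+2α} + n) ≤ C(α) · n^{-2α/(1+2α)} for all n ≥ 1, where C(α) depends only on α > 0. -/

import Mathlib

open Real Finset

/-- Tangent-line (Bernoulli) estimate: `q * (a+1)^(-(1+q)) ≤ a^(-q) - (a+1)^(-q)`. -/
lemma key_ineq {q a : ℝ} (hq : 0 < q) (ha : 1 ≤ a) :
    q * (a + 1) ^ (-(1 + q)) ≤ a ^ (-q) - (a + 1) ^ (-q) := by
  have ha0 : (0:ℝ) < a := by linarith
  have hb0 : (0:ℝ) < a + 1 := by linarith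
  have hX0 : 0 < a ^ q := rpow_pos_of_pos ha0 q
  have hY0 : 0 < (a + 1) ^ q := rpow_pos_of_pos hb0 q
  set X := a ^ q with hX
  set Y := (a + 1) ^ q with hY
  have h1a : (0:ℝ) ≤ 1 / a := by positivity
  have hbern : 1 + (q + 1) * (1 / a) ≤ (1 + 1 / a) ^ (q + 1) :=
    one_add_mul_self_le_rpow_one_add (by linarith) (by linarith)
  have h1 : 1 + 1 / a = (a + 1) / a := by field_simp
  have e1 : (a + 1) ^ (q + 1) = (a + 1) * Y := by
    rw [Real.rpow_add hb0, Real.rpow_one, ← hY]; ring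
  have e2 : a ^ (q + 1) = a * X := by
    rw [Real.rpow_add ha0, Real.rpow_one, ← hX]; ring
  have h2 : ((a + 1) / a : ℝ) ^ (q + 1) = ((a + 1) * Y) / (a * X) := by
    rw [Real.div_rpow hb0.le ha0.le, e1, e2]
  rw [h1, h2] at hbern
  have h3 : (1 + (q + 1) * (1 / a)) * (a * X) ≤ (a + 1) * Y :=
    (le_div_iff₀ (by positivity)).mp hbern
  have h4 : (1 + (q + 1) * (1 / a)) * (a * X) = X * (a + q + 1) := by
    field_simp
    ring
  have hkey : X * (a + q + 1) ≤ (a + 1) * Y := by rw [← h4]; exact h3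
  have hfe : a ^ (-q) - (a + 1) ^ (-q) = (Y - X) / (X * Y) := by
    rw [Real.rpow_neg ha0.le, Real.rpow_neg hb0.le, ← hX, ← hY]
    field_simp
  have hle : (a + 1) ^ (-(1 + q)) = ((a + 1) * Y)⁻¹ := by
    rw [Real.rpow_neg hb0.le, Real.rpow_add hb0, Real.rpow_one, ← hY, mul_comm]
  rw [hfe, hle, ← div_eq_mul_inv, div_le_div_iff₀ (by positivity) (by positivity)]
  nlinarith [mul_le_mul_of_nonneg_right hkey hY0.le, hX0, hY0]

/-- Upper bound on posterior spread: `∑_{i≥1} 1/(i^(1+2α) + n) ≤ C(α)·n^(-2α/(1+2α))`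
for all `n ≥ 1`, with `C(α)` depending only on `α > 0`. -/
theorem stmt_11 (α : ℝ) (hα : 0 < α) :
    ∃ C : ℝ, 0 < C ∧ ∀ n : ℕ, 1 ≤ n →
      (∑' i : ℕ, 1 / (((i : ℝ) + 1) ^ (1 + 2 * α) + n))
        ≤ C * (n : ℝ) ^ (-(2 * α) / (1 + 2 * α)) := by
  set q := 2 * α with hqdef
  have hq : 0 < q := by positivity
  refine ⟨2 + 1 / q, by positivity, ?_⟩
  intro n hn
  have hn1 : (1:ℝ) ≤ n := by exact_mod_cast hn
  have hn0 : (0:ℝ) < n := by linarith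
  have h1q : (0:ℝ) < 1 + q := by linarith
  set r : ℝ := (n : ℝ) ^ ((1:ℝ) / (1 + q)) with hrdef
  have hr1 : 1 ≤ r := Real.one_le_rpow hn1 (by positivity)
  set J : ℕ := ⌈r⌉₊ with hJdef
  have hJ1 : 1 ≤ J := Nat.one_le_ceil_iff.mpr (by linarith)
  have hrJ : r ≤ (J : ℝ) := Nat.le_ceil r
  have hJr : (J : ℝ) ≤ r + 1 := (Nat.ceil_lt_add_one (by linarith)).le
  have hpos : ∀ i : ℕ, (0:ℝ) < ((i : ℝ) + 1) ^ (1 + q) :=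
    fun i => rpow_pos_of_pos (by positivity) _
  have hf_nonneg : ∀ i : ℕ, 0 ≤ 1 / (((i : ℝ) + 1) ^ (1 + q) + n) := by
    intro i
    have := hpos i
    positivity
  -- summability
  have hcmp : Summable (fun i : ℕ => 1 / ((i : ℝ) + 1) ^ (1 + q)) := by
    have h := (Real.summable_one_div_nat_add_rpow 1 (1 + q)).mpr (by linarith)
    refine h.congr fun i => ?_
    rw [abs_of_pos (by positivity)]
  have hs : Summable (fun i : ℕ => 1 / (((i : ℝ) + 1) ^ (1 + q) + n)) := by
    refine Summable.of_nonneg_of_le hf_nonneg (fun i => ?_) hcmp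
    exact one_div_le_one_div_of_le (hpos i) (by linarith)
  -- head bound
  have hhead : ∑ i ∈ Finset.range J, 1 / (((i : ℝ) + 1) ^ (1 + q) + n) ≤ (J : ℝ) / n := by
    calc ∑ i ∈ Finset.range J, 1 / (((i : ℝ) + 1) ^ (1 + q) + n)
        ≤ ∑ _i ∈ Finset.range J, 1 / (n : ℝ) := by
          refine Finset.sum_le_sum fun i _ => ?_
          exact one_div_le_one_div_of_le hn0 (by linarith [(hpos i).le])
      _ = (J : ℝ) / n := by
          rw [Finset.sum_const, Finset.card_range, nsmul_eq_mul]
          ring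
  -- tail bound
  have htail : (∑' i : ℕ, 1 / ((((i + J : ℕ) : ℝ) + 1) ^ (1 + q) + n))
      ≤ (1 / q) * (J : ℝ) ^ (-q) := by
    apply Real.tsum_le_of_sum_range_le (fun i => hf_nonneg (i + J))
    intro m
    have hterm : ∀ i ∈ Finset.range m,
        1 / ((((i + J : ℕ) : ℝ) + 1) ^ (1 + q) + n)
          ≤ (1 / q) * (((i + J : ℕ) : ℝ) ^ (-q) - (((i + 1 + J : ℕ) : ℝ)) ^ (-q)) := by
      intro i _
      set a : ℝ := ((i + J : ℕ) : ℝ) with hadef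
      have ha1 : (1:ℝ) ≤ a := by
        have : 1 ≤ i + J := le_trans hJ1 (Nat.le_add_left J i)
        rw [hadef]; exact_mod_cast this
      have ha0 : (0:ℝ) < a + 1 := by linarith
      have hcast : ((i + 1 + J : ℕ) : ℝ) = a + 1 := by
        rw [hadef]; push_cast; ring
      rw [hcast]
      have hk := key_ineq hq ha1
      have hb : 1 / ((a + 1) ^ (1 + q) + n) ≤ (a + 1) ^ (-(1 + q)) := by
        rw [Real.rpow_neg ha0.le, ← one_div]
        exact one_div_le_one_div_of_le (rpow_pos_of_pos ha0 _) (by linarith)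
      refine hb.trans ?_
      rw [one_div, ← div_eq_inv_mul, le_div_iff₀ hq]
      linarith
    calc ∑ i ∈ Finset.range m, 1 / ((((i + J : ℕ) : ℝ) + 1) ^ (1 + q) + n)
        ≤ ∑ i ∈ Finset.range m,
            (1 / q) * (((i + J : ℕ) : ℝ) ^ (-q) - (((i + 1 + J : ℕ) : ℝ)) ^ (-q)) :=
          Finset.sum_le_sum hterm
      _ = (1 / q) * (((0 + J : ℕ) : ℝ) ^ (-q) - ((m + J : ℕ) : ℝ) ^ (-q)) := by
          rw [← Finset.mul_sum]
          congr 1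
          exact Finset.sum_range_sub' (fun k => ((k + J : ℕ) : ℝ) ^ (-q)) m
      _ ≤ (1 / q) * (J : ℝ) ^ (-q) := by
          have h0 : (0:ℝ) ≤ ((m + J : ℕ) : ℝ) ^ (-q) := by positivity
          have : ((0 + J : ℕ) : ℝ) = (J : ℝ) := by norm_num
          rw [this]
          have h1q' : (0:ℝ) ≤ 1 / q := by positivity
          nlinarith
  -- put things together
  have hJ0 : (0:ℝ) < J := by exact_mod_cast hJ1
  have hexp : (1:ℝ) / (1 + q) - 1 = -q / (1 + q) := by
    field_simp
    ring
  have h5 : (J : ℝ) / n ≤ 2 * (n : ℝ) ^ (-q / (1 + q)) := by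
    have step1 : (J : ℝ) / n ≤ (2 * r) / n := by
      gcongr
      linarith
    refine step1.trans (le_of_eq ?_)
    rw [hrdef, ← hexp, Real.rpow_sub hn0, Real.rpow_one]
    ring
  have h6 : (1 / q) * (J : ℝ) ^ (-q) ≤ (1 / q) * (n : ℝ) ^ (-q / (1 + q)) := by
    have hmono : r ^ q ≤ (J : ℝ) ^ q := Real.rpow_le_rpow (by positivity) hrJ hq.le
    have hJle : (J : ℝ) ^ (-q) ≤ r ^ (-q) := by
      rw [Real.rpow_neg hJ0.le, Real.rpow_neg (by positivity : (0:ℝ) ≤ r)]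
      exact inv_anti₀ (rpow_pos_of_pos (by linarith) q) hmono
    have hrq : r ^ (-q) = (n : ℝ) ^ (-q / (1 + q)) := by
      rw [hrdef, ← Real.rpow_mul hn0.le]
      congr 1
      ring
    rw [← hrq]
    exact mul_le_mul_of_nonneg_left hJle (by positivity)
  calc (∑' i : ℕ, 1 / (((i : ℝ) + 1) ^ (1 + q) + n))
      = (∑ i ∈ Finset.range J, 1 / (((i : ℝ) + 1) ^ (1 + q) + n))
          + ∑' i : ℕ, 1 / ((((i + J : ℕ) : ℝ) + 1) ^ (1 + q) + n) :=
        (hs.sum_add_tsum_nat_add J).symm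
    _ ≤ (J : ℝ) / n + (1 / q) * (J : ℝ) ^ (-q) := add_le_add hhead htail
    _ ≤ 2 * (n : ℝ) ^ (-q / (1 + q)) + (1 / q) * (n : ℝ) ^ (-q / (1 + q)) :=
        add_le_add h5 h6
    _ = (2 + 1 / q) * (n : ℝ) ^ (-q / (1 + q)) := by ring
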